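/- Let G be a finite group and S ⊆ G a subset that is inverse-closed (s ∈ S implies s⁻¹ ∈ S), does not contain the identity, and is closed under conjugation (g⁻¹sg ∈ S for all s ∈ S, g ∈ G). Then for every irreducible finite-dimensional complex representation of G with character χ, the complex number η_χ = (∑_{s ∈ S} χ(s)) / χ(1) is an eigenvalue of the adjacency matrix of the Cayley graph Γ(G,S), viewed as a matrix over ℂ. -/

import Mathlib

open CategoryTheory

noncomputable section

lemma key {G : Type} [Group G] [Fintype G] [DecidableEq G] (S : Finset G)
    (hconj : ∀ s ∈ S, ∀ g : G, g⁻¹ * s * g ∈ S)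
    (V : FDRep ℂ G) (hV : Simple V) :
    ∃ c : ℂ, (∑ s ∈ S, V.character s) = c * V.character 1 ∧
      ∀ u : G, (∑ s ∈ S, V.character (s * u)) = c * V.character u := by
  have hcomm : ∀ g : G, V.ρ g * (∑ s ∈ S, V.ρ s) = (∑ s ∈ S, V.ρ s) * V.ρ g := by
    intro g
    rw [Finset.sum_mul, Finset.mul_sum]
    refine Finset.sum_nbij' (fun s => g * s * g⁻¹) (fun s => g⁻¹ * s * g) ?_ ?_ ?_ ?_ ?_
    · intro s hs; simpa using hconj s hs g⁻¹
    · intro s hs; exact hconj s hs g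
    · intro s hs; group
    · intro s hs; group
    · intro s hs
      rw [← map_mul, ← map_mul]
      congr 1
      group
  let f : V ⟶ V := ⟨ConcreteCategory.ofHom (C := FGModuleCat ℂ) (X := V.V) (Y := V.V)
    (∑ s ∈ S, V.ρ s : V →ₗ[ℂ] V), fun g => by ext x; exact LinearMap.congr_fun (hcomm g).symm x⟩
  obtain ⟨c, hc⟩ := endomorphism_simple_eq_smul_id (X := V) ℂ f
  have hhom : (∑ s ∈ S, V.ρ s : V →ₗ[ℂ] V) = c • (1 : V →ₗ[ℂ] V) := by
    have := congrArg (fun φ : V ⟶ V => φ.hom.hom.hom) hc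
    exact this.symm
  have main : ∀ u : G, (∑ s ∈ S, V.character (s * u)) = c * V.character u := by
    intro u
    have : (∑ s ∈ S, V.character (s * u))
        = LinearMap.trace ℂ V ((∑ s ∈ S, V.ρ s) * V.ρ u) := by
      rw [Finset.sum_mul, map_sum]
      refine Finset.sum_congr rfl fun s _ => ?_
      simp [FDRep.character, map_mul]
    rw [this, hhom, smul_mul_assoc, map_smul, one_mul, smul_eq_mul]
    rfl
  refine ⟨c, ?_, main⟩
  simpa using main 1

theorem stmt_0 {G : Type} [Group G] [Fintype G] [DecidableEq G]
    (S : Finset G)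
    (hinv : ∀ s ∈ S, s⁻¹ ∈ S)
    (hid : (1 : G) ∉ S)
    (hconj : ∀ s ∈ S, ∀ g : G, g⁻¹ * s * g ∈ S)
    (Γ : SimpleGraph G) [DecidableRel Γ.Adj]
    (hΓ : ∀ u v : G, Γ.Adj u v ↔ v * u⁻¹ ∈ S)
    (V : FDRep ℂ G) (hV : Simple V) :
    (∑ s ∈ S, V.character s) / V.character 1 ∈ spectrum ℂ (Γ.adjMatrix ℂ) := by
  obtain ⟨c, hc1, hc⟩ := key S hconj V hV
  have hdim : V.character 1 ≠ 0 := by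
    rw [FDRep.char_one]
    have hfr : Module.finrank ℂ V ≠ 0 := by
      intro h
      have : Subsingleton V := Module.finrank_zero_iff.mp h
      refine id_nonzero V ?_
      apply Action.hom_ext
      apply FGModuleCat.hom_ext
      apply LinearMap.ext
      intro x
      exact @Subsingleton.elim _ this _ _
    exact_mod_cast hfr
  have heta : (∑ s ∈ S, V.character s) / V.character 1 = c := by
    rw [hc1, mul_div_assoc, div_self hdim, mul_one]
  rw [heta, ← AlgEquiv.spectrum_eq (Matrix.toLinAlgEquiv' (R := ℂ) (n := G)) (Γ.adjMatrix ℂ)]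
  have hne : (fun g => V.character g) ≠ (0 : G → ℂ) := fun h => hdim (congrFun h 1)
  have hfx : Matrix.toLinAlgEquiv' (Γ.adjMatrix ℂ) (fun g => V.character g)
      = c • (fun g => V.character g) := by
    funext u
    have h1 : Matrix.toLinAlgEquiv' (Γ.adjMatrix ℂ) (fun g => V.character g) u
        = ∑ v ∈ Γ.neighborFinset u, V.character v := by
      simp [Matrix.toLinAlgEquiv'_apply, Matrix.toLin'_apply,
        SimpleGraph.adjMatrix_mulVec_apply]
    rw [h1]
    have h2 : ∑ v ∈ Γ.neighborFinset u, V.character v = ∑ s ∈ S, V.character (s * u) := by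
      refine Finset.sum_nbij' (fun v => v * u⁻¹) (fun s => s * u) ?_ ?_ ?_ ?_ ?_
      · intro v hv
        exact (hΓ u v).mp ((SimpleGraph.mem_neighborFinset Γ u v).mp hv)
      · intro s hs
        rw [SimpleGraph.mem_neighborFinset, hΓ]
        simpa using hs
      · intro v hv; group
      · intro s hs; group
      · intro v hv
        congr 1
        group
    rw [h2, hc u]
    rfl
  exact Module.End.HasEigenvalue.mem_spectrum
    (Module.End.hasEigenvalue_of_hasEigenvector
      ⟨Module.End.mem_eigenspace_iff.mpr hfx, hne⟩)
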